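/- Let λ : ℕ → ℂ satisfy Σ_n |λ_n|² = 1 and |λ_0| < 1. For each k ∈ ℕ define η̃_k : ℕ → ℂ by η̃_k(n) = λ_{n+k} · 2^{-(n+k)/2} · (Nat.choose (n+k) k)^{1/2}, and set 𝒩_{00} = 2(1+|λ_0|²), 𝒩_{01} = 2(1-|λ_0|²). Let η : ℕ → ℂ satisfy Σ_n |η_n|² = 1 and Σ_n conj(η_n)·η̃_{2k}(n) = 0 for all k ∈ ℕ. Then the GYNI value F := (4/𝒩_{00}) Σ_{k=0}^∞ (Σ_n |η̃_{2k}(n)|² − |Σ_n conj(η_n)·η̃_{2k}(n)|²) + (4/𝒩_{01}) Σ_{k=0}^∞ |Σ_n conj(η_n)·η̃_{2k+1}(n)|² satisfies F = 1 + (4/𝒩_{01}) Σ_{k=0}^∞ |Σ_n conj(η_n)·η̃_{2k+1}(n)|² ≥ 1, with equality if and only if Σ_n conj(η_n)·η̃_{2k+1}(n) = 0 for every k. -/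

import Mathlib

open scoped BigOperators

open Finset

private lemma ostep (m : ℕ) :
    ∑ j ∈ range (m+2), (m+1).choose (2*j+1)
      = (∑ j ∈ range (m+1), m.choose (2*j)) + ∑ j ∈ range (m+1), m.choose (2*j+1) := by
  have h : ∀ j ∈ range (m+2), (m+1).choose (2*j+1) = m.choose (2*j) + m.choose (2*j+1) :=
    fun j _ => Nat.choose_succ_succ _ _
  rw [Finset.sum_congr rfl h, Finset.sum_add_distrib,
    Finset.sum_range_succ (fun j => m.choose (2*j)),
    Finset.sum_range_succ (fun j => m.choose (2*j+1)),
    Nat.choose_eq_zero_of_lt (by omega), Nat.choose_eq_zero_of_lt (by omega)]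
  omega

private lemma estep (m : ℕ) :
    ∑ j ∈ range (m+2), (m+1).choose (2*j)
      = (∑ j ∈ range (m+1), m.choose (2*j)) + ∑ j ∈ range (m+1), m.choose (2*j+1) := by
  rw [Finset.sum_range_succ' (fun j => (m+1).choose (2*j))]
  have h : ∀ j ∈ range (m+1), (m+1).choose (2*(j+1)) = m.choose (2*j+1) + m.choose (2*j+2) := by
    intro j _
    rw [show 2*(j+1) = (2*j+1)+1 by ring, Nat.choose_succ_succ]
  rw [Finset.sum_congr rfl h, Finset.sum_add_distrib]
  have h2 : ∑ j ∈ range (m+1), m.choose (2*j+2)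
      = ∑ j ∈ range (m+1), m.choose (2*j) - 1 := by
    rw [Finset.sum_range_succ (fun j => m.choose (2*j+2)),
      Nat.choose_eq_zero_of_lt (by omega),
      Finset.sum_range_succ' (fun j => m.choose (2*j))]
    simp [mul_add]
  have h3 : 1 ≤ ∑ j ∈ range (m+1), m.choose (2*j) := by
    have := Finset.single_le_sum (f := fun j => m.choose (2*j))
      (fun i _ => Nat.zero_le _) (Finset.mem_range.2 (show 0 < m+1 by omega))
    simpa using this
  simp only [Nat.choose_zero_right, mul_zero] at *
  omega

private lemma eo (m : ℕ) :
    (∑ j ∈ range (m+1), m.choose (2*j)) + (∑ j ∈ range (m+1), m.choose (2*j+1)) = 2^m := by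
  induction m with
  | zero => simp
  | succ m ih =>
    rw [show m+1+1 = m+2 from rfl, estep, ostep, pow_succ]
    omega

private lemma esum (m : ℕ) : ∑ j ∈ range (m+2), (m+1).choose (2*j) = 2^m := by
  rw [estep, eo]

private lemma osum (m : ℕ) : ∑ j ∈ range (m+2), (m+1).choose (2*j+1) = 2^m := by
  rw [ostep, eo]

private lemma choose_le_two_pow (m j : ℕ) : m.choose j ≤ 2^m := by
  rcases le_or_gt j m with h | h
  · calc m.choose j ≤ ∑ i ∈ range (m+1), m.choose i :=
      Finset.single_le_sum (fun _ _ => Nat.zero_le _) (Finset.mem_range.2 (by omega))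
    _ = 2^m := Nat.sum_range_choose m
  · simp [Nat.choose_eq_zero_of_lt h]

noncomputable def gyniAux (a : ℕ → ℝ) (p : ℕ) : ℕ × ℕ → ℝ :=
  fun q => a q.2 * ((1:ℝ)/2)^q.2 * ((q.2).choose (2*q.1+p) : ℝ)

private lemma gyniAux_nonneg (a : ℕ → ℝ) (ha : ∀ m, 0 ≤ a m) (p : ℕ) (q : ℕ × ℕ) :
    0 ≤ gyniAux a p q := by
  have := ha q.2
  unfold gyniAux
  positivity

private lemma gyniAux_le (a : ℕ → ℝ) (ha : ∀ m, 0 ≤ a m) (p : ℕ) (q : ℕ × ℕ) :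
    gyniAux a p q ≤ a q.2 := by
  have h1 : ((q.2.choose (2*q.1+p)):ℝ) ≤ 2^q.2 := by
    exact_mod_cast choose_le_two_pow q.2 (2*q.1+p)
  have h2 : (0:ℝ) ≤ ((1:ℝ)/2)^q.2 := by positivity
  have h3 : ((1:ℝ)/2)^q.2 * (2:ℝ)^q.2 = 1 := by
    rw [← mul_pow]; norm_num
  have := ha q.2
  calc gyniAux a p q = a q.2 * (((1:ℝ)/2)^q.2 * ((q.2.choose (2*q.1+p)):ℝ)) := by
        unfold gyniAux; ring
    _ ≤ a q.2 * (((1:ℝ)/2)^q.2 * (2:ℝ)^q.2) := by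
        apply mul_le_mul_of_nonneg_left _ (ha q.2)
        exact mul_le_mul_of_nonneg_left h1 h2
    _ = a q.2 := by rw [h3, mul_one]

private lemma gyniAux_tsum_k (a : ℕ → ℝ) (p m : ℕ) :
    ∑' k : ℕ, gyniAux a p (k, m)
      = a m * ((1:ℝ)/2)^m * ∑ j ∈ Finset.range (m+1), ((m.choose (2*j+p)) : ℝ) := by
  have h : ∑' k : ℕ, gyniAux a p (k, m) = ∑ k ∈ Finset.range (m+1), gyniAux a p (k, m) := by
    apply tsum_eq_sum
    intro k hk
    have hk' : m + 1 ≤ k := by simpa using Finset.mem_range.not.1 hk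
    have : m.choose (2*k+p) = 0 := Nat.choose_eq_zero_of_lt (by omega)
    simp [gyniAux, this]
  rw [h, Finset.mul_sum]
  rfl

private lemma Ep_eval (p : ℕ) (hp : p ≤ 1) (m : ℕ) :
    (∑ j ∈ Finset.range (m+1), ((m.choose (2*j+p)):ℝ))
      = if m = 0 then (if p = 0 then 1 else 0) else 2^(m-1) := by
  interval_cases p
  · cases m with
    | zero => simp
    | succ m =>
      rw [← Nat.cast_sum]
      simp only [Nat.add_zero, Nat.succ_ne_zero, if_false]
      norm_cast
      simpa using esum m
  · cases m with
    | zero => simp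
    | succ m =>
      rw [← Nat.cast_sum]
      simp only [Nat.succ_ne_zero, if_false]
      norm_cast
      simpa using osum m

private lemma B_eval (a : ℕ → ℝ) (p : ℕ) (hp : p ≤ 1) (m : ℕ) :
    ∑' k : ℕ, gyniAux a p (k, m)
      = a m / 2 + (if m = 0 then (if p = 0 then a 0 / 2 else -(a 0)/2) else 0) := by
  rw [gyniAux_tsum_k, Ep_eval p hp]
  cases m with
  | zero =>
    simp only [pow_zero, mul_one, if_pos rfl, reduceIte]
    split_ifs <;> ring
  | succ m =>
    simp only [Nat.succ_ne_zero, if_false, add_zero, Nat.succ_sub_one]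
    have : ((1:ℝ)/2)^(m+1) * 2^m = 1/2 := by
      rw [pow_succ]
      have : ((1:ℝ)/2)^m * (2:ℝ)^m = 1 := by rw [← mul_pow]; norm_num
      nlinarith [this]
    calc a (m+1) * ((1:ℝ)/2)^(m+1) * 2^m = a (m+1) * (((1:ℝ)/2)^(m+1) * 2^m) := by ring
      _ = a (m+1) / 2 := by rw [this]; ring

private lemma gyniAux_key (a : ℕ → ℝ) (ha : ∀ m, 0 ≤ a m) (hA : Summable a)
    (p : ℕ) (hp : p ≤ 1) :
    (∀ k, Summable fun m => gyniAux a p (k, m)) ∧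
    (Summable fun k : ℕ => ∑' m : ℕ, gyniAux a p (k, m)) ∧
    (∑' k : ℕ, ∑' m : ℕ, gyniAux a p (k, m))
      = ((∑' m, a m) + (if p = 0 then a 0 else - a 0)) / 2 := by
  have hnn : ∀ q : ℕ × ℕ, 0 ≤ gyniAux a p q := gyniAux_nonneg a ha p
  have hfibm : ∀ k, Summable fun m => gyniAux a p (k, m) := fun k =>
    Summable.of_nonneg_of_le (fun m => hnn (k, m)) (fun m => gyniAux_le a ha p (k, m)) hA
  have hfibk : ∀ m, Summable fun k => gyniAux a p (k, m) := by
    intro m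
    apply summable_of_ne_finset_zero (s := Finset.range (m+1))
    intro k hk
    have hk' : m + 1 ≤ k := by simpa using Finset.mem_range.not.1 hk
    have : m.choose (2*k+p) = 0 := Nat.choose_eq_zero_of_lt (by omega)
    simp [gyniAux, this]
  have hBle : ∀ m, (∑' k : ℕ, gyniAux a p (k, m)) ≤ a m := by
    intro m
    rw [B_eval a p hp m]
    have h0 := ha 0
    have hm := ha m
    cases m with
    | zero => split_ifs <;> simp <;> linarith
    | succ m => simp; linarith
  have hswap : Summable (fun q : ℕ × ℕ => gyniAux a p (q.2, q.1)) := by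
    rw [summable_prod_of_nonneg (fun q => hnn (q.2, q.1))]
    refine ⟨fun m => hfibk m, ?_⟩
    exact Summable.of_nonneg_of_le (fun m => tsum_nonneg fun k => hnn (k, m)) hBle hA
  have hG : Summable (gyniAux a p) := by
    have := (Equiv.prodComm ℕ ℕ).summable_iff (f := gyniAux a p)
    exact this.1 hswap
  refine ⟨hfibm, ((summable_prod_of_nonneg hnn).1 hG).2, ?_⟩
  have h1 : ∑' k : ℕ, ∑' m : ℕ, gyniAux a p (k, m) = ∑' q : ℕ × ℕ, gyniAux a p q :=
    (Summable.tsum_prod' hG hfibm).symm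
  have h2 : ∑' q : ℕ × ℕ, gyniAux a p q = ∑' q : ℕ × ℕ, gyniAux a p (q.2, q.1) := by
    exact ((Equiv.prodComm ℕ ℕ).tsum_eq (f := gyniAux a p)).symm
  have h3 : ∑' q : ℕ × ℕ, gyniAux a p (q.2, q.1) = ∑' m : ℕ, ∑' k : ℕ, gyniAux a p (k, m) :=
    Summable.tsum_prod' hswap (fun m => hfibk m)
  rw [h1, h2, h3]
  have h4 : ∀ m : ℕ, ∑' k : ℕ, gyniAux a p (k, m)
      = a m / 2 + (if m = 0 then (if p = 0 then a 0 / 2 else -(a 0)/2) else 0) :=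
    B_eval a p hp
  rw [tsum_congr h4, Summable.tsum_add (hA.div_const 2)
    (summable_of_ne_finset_zero (s := {0}) (by intro m hm; simp at hm; simp [hm]))]
  have h5 : ∑' m : ℕ, (if m = 0 then (if p = 0 then a 0 / 2 else -(a 0)/2) else 0)
      = (if p = 0 then a 0 / 2 else -(a 0)/2) := tsum_ite_eq 0 _
  rw [h5, tsum_div_const]
  split_ifs <;> ring

private lemma tsum_shift {α : Type*} [AddCommMonoid α] [TopologicalSpace α]
    (f : ℕ → α) (c : ℕ) (hf : ∀ m < c, f m = 0) :
    ∑' n : ℕ, f (n + c) = ∑' m : ℕ, f m := by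
  apply Function.Injective.tsum_eq (add_left_injective c)
  intro m hm
  rcases le_or_gt c m with h | h
  · exact ⟨m - c, by simp [Nat.sub_add_cancel h]⟩
  · exact absurd (hf m h) hm

private lemma pow_half_sq (m : ℕ) : ((2:ℝ) ^ (-(m:ℝ) / 2)) ^ 2 = ((1:ℝ)/2)^m := by
  have h2 : (0:ℝ) ≤ 2 := by norm_num
  rw [← Real.rpow_natCast ((2:ℝ) ^ (-(m:ℝ)/2)) 2, ← Real.rpow_mul h2]
  have : -(m:ℝ) / 2 * (2:ℕ) = -(m:ℝ) := by push_cast; ring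
  rw [this, Real.rpow_neg h2, Real.rpow_natCast, one_div, inv_pow]

set_option maxHeartbeats 1000000 in
/-- In the proof of Theorem 1: if Alice's projector vector `η` is orthogonal to
all even annihilated sequences `η̃_{2k}`, the GYNI value `F` equals
`1 + (4/𝒩₀₁)·Σ_k |⟨η, η̃_{2k+1}⟩|² ≥ 1`, with equality iff `η` is also
orthogonal to all odd sequences. -/
theorem gyni_value_formula
    (lam : ℕ → ℂ)
    (hnorm : ∑' n : ℕ, Norm.norm (lam n) ^ 2 = 1)
    (h0 : Norm.norm (lam 0) < 1)
    (eta : ℕ → ℕ → ℂ)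
    (heta : ∀ k n : ℕ, eta k n = lam (n + k) *
      (((2 : ℝ) ^ (-((n + k : ℕ) : ℝ) / 2) : ℝ) : ℂ) *
      ((Real.sqrt (Nat.choose (n + k) k : ℝ) : ℝ) : ℂ))
    (N00 N01 : ℝ)
    (hN00 : N00 = 2 * (1 + Norm.norm (lam 0) ^ 2))
    (hN01 : N01 = 2 * (1 - Norm.norm (lam 0) ^ 2))
    (η : ℕ → ℂ) (hη : ∑' n : ℕ, Norm.norm (η n) ^ 2 = 1)
    (horth : ∀ k : ℕ, ∑' n : ℕ, (starRingEnd ℂ) (η n) * eta (2 * k) n = 0)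
    (F : ℝ)
    (hF : F = (4 / N00) * (∑' k : ℕ,
        ((∑' n : ℕ, Norm.norm (eta (2 * k) n) ^ 2) -
          Norm.norm (∑' n : ℕ, (starRingEnd ℂ) (η n) * eta (2 * k) n) ^ 2)) +
      (4 / N01) * (∑' k : ℕ,
        Norm.norm (∑' n : ℕ, (starRingEnd ℂ) (η n) * eta (2 * k + 1) n) ^ 2)) :
    F = 1 + (4 / N01) * (∑' k : ℕ,
        Norm.norm (∑' n : ℕ, (starRingEnd ℂ) (η n) * eta (2 * k + 1) n) ^ 2) ∧
    1 ≤ F ∧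
    (F = 1 ↔ ∀ k : ℕ, ∑' n : ℕ, (starRingEnd ℂ) (η n) * eta (2 * k + 1) n = 0) := by
  classical
  set a : ℕ → ℝ := fun m => ‖lam m‖ ^ 2 with ha_def
  have ha : ∀ m, 0 ≤ a m := fun m => by rw [ha_def]; positivity
  have hA : Summable a := by
    by_contra h
    rw [tsum_eq_zero_of_not_summable h] at hnorm
    norm_num at hnorm
  have ha0lt : a 0 < 1 := by
    rw [ha_def]
    exact pow_lt_one₀ (norm_nonneg _) h0 two_ne_zero
  -- |eta k n|^2 in terms of gyniAux data
  have habs : ∀ k n : ℕ, ‖eta k n‖ ^ 2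
      = a (n+k) * ((1:ℝ)/2)^(n+k) * (((n+k).choose k : ℕ) : ℝ) := by
    intro k n
    rw [heta k n, norm_mul, norm_mul, Complex.norm_real, Complex.norm_real, Real.norm_eq_abs, Real.norm_eq_abs,
      abs_of_pos (Real.rpow_pos_of_pos two_pos _), abs_of_nonneg (Real.sqrt_nonneg _),
      mul_pow, mul_pow, pow_half_sq, Real.sq_sqrt (by positivity)]
  have hshift_eta : ∀ p k : ℕ, (∑' n : ℕ, ‖eta (2*k+p) n‖ ^ 2)
      = ∑' m : ℕ, gyniAux a p (k, m) := by
    intro p k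
    have hcong : ∀ n : ℕ, ‖eta (2*k+p) n‖ ^ 2 = gyniAux a p (k, n + (2*k+p)) := by
      intro n
      rw [habs]
      rfl
    rw [tsum_congr hcong]
    exact tsum_shift (fun m => gyniAux a p (k, m)) (2*k+p) (fun m hm => by
      simp [gyniAux, Nat.choose_eq_zero_of_lt hm])
  have keyE := gyniAux_key a ha hA 0 (by norm_num)
  have keyO := gyniAux_key a ha hA 1 (by norm_num)
  -- the even part equals 1
  have hEterm : ∀ k : ℕ, ((∑' n : ℕ, ‖eta (2 * k) n‖ ^ 2) -
      ‖∑' n : ℕ, (starRingEnd ℂ) (η n) * eta (2 * k) n‖ ^ 2)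
      = ∑' m : ℕ, gyniAux a 0 (k, m) := by
    intro k
    have h := hshift_eta 0 k
    simp only [add_zero] at h
    rw [horth k, h]
    simp
  have hEven : (∑' k : ℕ,
      ((∑' n : ℕ, ‖eta (2 * k) n‖ ^ 2) -
        ‖∑' n : ℕ, (starRingEnd ℂ) (η n) * eta (2 * k) n‖ ^ 2))
      = (1 + a 0) / 2 := by
    rw [tsum_congr hEterm, keyE.2.2, hnorm]
    norm_num
  have hN00pos : (0:ℝ) < N00 := by rw [hN00]; nlinarith [ha 0]
  have ha0e : ‖lam 0‖ ^ 2 = a 0 := rfl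
  have hN01pos : (0:ℝ) < N01 := by rw [hN01, ha0e]; nlinarith
  have hfirst : 4 / N00 * ((1 + a 0) / 2) = 1 := by
    rw [hN00, ha0e]
    have h1 : (0:ℝ) < 1 + a 0 := by nlinarith [ha 0]
    have h2 : (1 + a 0) ≠ 0 := ne_of_gt h1
    field_simp
    ring
  set S : ℝ := ∑' k : ℕ,
      ‖∑' n : ℕ, (starRingEnd ℂ) (η n) * eta (2 * k + 1) n‖ ^ 2 with hS_def
  have hFval : F = 1 + (4 / N01) * S := by
    rw [hF, hEven, hfirst]
  have hSnn : 0 ≤ S := tsum_nonneg fun k => by positivity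
  -- summability of the odd inner products via Cauchy-Schwarz in ℓ²
  have hSη : Summable (fun n => ‖η n‖ ^ 2) := by
    by_contra h
    rw [tsum_eq_zero_of_not_summable h] at hη
    norm_num at hη
  have htwo : ((2 : ENNReal).toReal) = (2:ℝ) := by simp
  have memη : Memℓp η 2 := by
    apply memℓp_gen
    apply Summable.congr hSη
    intro n
    rw [htwo, Real.rpow_two]
  have memx : ∀ k : ℕ, Memℓp (eta (2*k+1)) 2 := by
    intro k
    apply memℓp_gen
    have h1 : Summable fun n : ℕ => gyniAux a 1 (k, n + (2*k+1)) :=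
      (keyO.1 k).comp_injective (add_left_injective (2*k+1))
    apply Summable.congr h1
    intro n
    rw [htwo, Real.rpow_two, habs]
    rfl
  set ηl : lp (fun _ : ℕ => ℂ) 2 := ⟨η, memη⟩ with hηl
  have hnormηl : ‖ηl‖ = 1 := by
    have h2 : (0:ℝ) < (2 : ENNReal).toReal := by rw [htwo]; norm_num
    have hh := lp.norm_rpow_eq_tsum h2 ηl
    have hcoe : ∀ i, ηl i = η i := fun i => rfl
    rw [htwo] at hh
    have : ‖ηl‖ ^ (2:ℝ) = 1 := by
      rw [hh, ← hη]
      apply tsum_congr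
      intro n
      rw [hcoe, Real.rpow_two]
    rw [Real.rpow_two] at this
    nlinarith [norm_nonneg ηl]
  have hbound : ∀ k : ℕ,
      ‖∑' n : ℕ, (starRingEnd ℂ) (η n) * eta (2 * k + 1) n‖ ^ 2
        ≤ ∑' m : ℕ, gyniAux a 1 (k, m) := by
    intro k
    set xl : lp (fun _ : ℕ => ℂ) 2 := ⟨eta (2*k+1), memx k⟩ with hxl
    have hcoe : ∀ i, xl i = eta (2*k+1) i := fun i => rfl
    have hinner : inner ℂ ηl xl = ∑' n : ℕ, (starRingEnd ℂ) (η n) * eta (2 * k + 1) n := by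
      rw [lp.inner_eq_tsum]
      apply tsum_congr
      intro n
      rw [RCLike.inner_apply']
    have hcs : ‖(inner ℂ ηl xl : ℂ)‖ ≤ ‖ηl‖ * ‖xl‖ := norm_inner_le_norm ηl xl
    rw [hnormηl, one_mul] at hcs
    have hxnorm : ‖xl‖ ^ 2 = ∑' m : ℕ, gyniAux a 1 (k, m) := by
      have h2 : (0:ℝ) < (2 : ENNReal).toReal := by rw [htwo]; norm_num
      have hh := lp.norm_rpow_eq_tsum h2 xl
      rw [htwo] at hh
      rw [← hshift_eta 1 k, ← Real.rpow_two, hh]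
      apply tsum_congr
      intro n
      rw [hcoe, Real.rpow_two]
    rw [← hinner, ← hxnorm]
    exact pow_le_pow_left₀ (norm_nonneg _) hcs 2
  have hc : Summable (fun k : ℕ =>
      ‖∑' n : ℕ, (starRingEnd ℂ) (η n) * eta (2 * k + 1) n‖ ^ 2) :=
    Summable.of_nonneg_of_le (fun k => by positivity) hbound keyO.2.1
  -- conclusions
  refine ⟨hFval, ?_, ?_⟩
  · rw [hFval]
    have : 0 ≤ 4 / N01 * S := mul_nonneg (by positivity) hSnn
    linarith
  · rw [hFval]
    constructor
    · intro h
      have hS0 : S = 0 := by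
        have h4 : 0 < 4 / N01 := by positivity
        nlinarith
      intro k
      have hk : ‖∑' n : ℕ, (starRingEnd ℂ) (η n) * eta (2 * k + 1) n‖ ^ 2 ≤ S := by
        rw [hS_def]
        exact hc.le_tsum k (fun j _ => by positivity)
      have hk2 : ‖∑' n : ℕ, (starRingEnd ℂ) (η n) * eta (2 * k + 1) n‖ = 0 := by
        nlinarith [norm_nonneg (∑' n : ℕ, (starRingEnd ℂ) (η n) * eta (2 * k + 1) n)]
      exact norm_eq_zero.1 hk2
    · intro h
      have hS0 : S = 0 := by
        rw [hS_def]
        have hz : ∀ k : ℕ,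
            ‖∑' n : ℕ, (starRingEnd ℂ) (η n) * eta (2 * k + 1) n‖ ^ 2 = 0 := by
          intro k
          rw [h k]
          simp
        rw [tsum_congr hz]
        exact tsum_zero
      rw [hS0]
      ring
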